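/- Let G(ξ,y,z) = (4 e^{2λy} / λ⁴) [ (cosh(λy) - cos(λξ))² + ( (sinh(λy)/y)(-ξ + λz) + sin(λξ) )² ] for a fixed λ ≠ 0 (with sinh(λy)/y interpreted as λ at y = 0). Then all partial derivatives ∂^{α₁}_ξ ∂^{α₂}_y ∂^{α₃}_z G(0,0,0) vanish for multi-indices with α₁ + α₂ + 2α₃ ≤ 3, and moreover ∂⁴_ξ G(0,0,0) = ∂⁴_y G(0,0,0) = 24, ∂²_ξ ∂²_y G(0,0,0) = 8, and ∂²_z G(0,0,0) = 8. -/

import Mathlib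

open Real

/-- `sinh(λy)/y`, interpreted by its continuous extension `λ` at `y = 0`. -/
noncomputable def shc (lam y : ℝ) : ℝ := if y = 0 then lam else sinh (lam * y) / y

/-- The function `G(ξ,y,z) = (4 e^{2λy}/λ⁴)[(cosh(λy)-cos(λξ))²
+ ((sinh(λy)/y)(-ξ+λz) + sin(λξ))²]`. -/
noncomputable def Gfun (lam : ℝ) (p : ℝ × ℝ × ℝ) : ℝ :=
  (4 * exp (2 * lam * p.2.1) / lam ^ 4) *
    ((cosh (lam * p.2.1) - cos (lam * p.1)) ^ 2
      + (shc lam p.2.1 * (-p.1 + lam * p.2.2) + sin (lam * p.1)) ^ 2)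

/-- Partial derivative in the `ξ` (first) variable. -/
noncomputable def Dxi (f : ℝ × ℝ × ℝ → ℝ) : ℝ × ℝ × ℝ → ℝ :=
  fun p => fderiv ℝ f p (1, 0, 0)

/-- Partial derivative in the `y` (second) variable. -/
noncomputable def Dy (f : ℝ × ℝ × ℝ → ℝ) : ℝ × ℝ × ℝ → ℝ :=
  fun p => fderiv ℝ f p (0, 1, 0)

/-- Partial derivative in the `z` (third) variable. -/
noncomputable def Dz (f : ℝ × ℝ × ℝ → ℝ) : ℝ × ℝ × ℝ → ℝ :=
  fun p => fderiv ℝ f p (0, 0, 1)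

/- ## Auxiliary machinery -/

lemma HasDerivAt.adj {f g : ℝ → ℝ} {f' g' : ℝ} {x : ℝ} (h : HasDerivAt f f' x)
    (hfg : ∀ y, g y = f y) (h' : g' = f') : HasDerivAt g g' x :=
  h' ▸ (h.congr_of_eventuallyEq (Filter.Eventually.of_forall hfg))

open ContDiff

section shcfacts
variable (l : ℝ)

lemma shc_eq_dslope : shc l = dslope (fun y => sinh (l * y)) 0 := by
  funext y
  rcases eq_or_ne y 0 with h | h
  · subst h
    rw [dslope_same, shc]
    simp only [if_pos rfl]
    have : HasDerivAt (fun y : ℝ => sinh (l * y)) (cosh (l * 0) * (l * 1)) 0 :=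
      ((hasDerivAt_id 0).const_mul l).sinh
    rw [this.deriv]; simp
  · rw [dslope_of_ne _ h, shc, if_neg h, slope_def_field]
    simp [sub_zero]

lemma analyticAt_shc (y : ℝ) : AnalyticAt ℝ (shc l) y := by
  have hsinh : ∀ x : ℝ, AnalyticAt ℝ (fun t => sinh (l * t)) x := by
    intro x
    have : AnalyticAt ℝ (fun t : ℝ => (exp (l * t) - exp (-(l * t))) / 2) x := by
      apply AnalyticAt.div
      · exact ((analyticAt_rexp.comp (analyticAt_const.mul analyticAt_id)).sub
          (analyticAt_rexp.comp ((analyticAt_const.mul analyticAt_id)).neg))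
      · exact analyticAt_const
      · norm_num
    exact this.congr (by filter_upwards with t using by rw [Real.sinh_eq])
  rcases eq_or_ne y 0 with h | h
  · subst h
    rw [shc_eq_dslope]
    obtain ⟨p, hp⟩ := hsinh 0
    exact (hp.has_fpower_series_dslope_fslope).analyticAt
  · have h2 : AnalyticAt ℝ (fun t : ℝ => sinh (l * t) / t) y :=
      (hsinh y).div analyticAt_id h
    apply h2.congr
    filter_upwards [eventually_ne_nhds h] with t ht
    rw [shc, if_neg ht]

lemma contDiff_shc : ContDiff ℝ ∞ (shc l) :=
  contDiff_iff_contDiffAt.2 fun y => (analyticAt_shc l y).contDiffAt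

@[simp] lemma shc_zero : shc l 0 = l := if_pos rfl

lemma shc_mul_self (y : ℝ) : shc l y * y = sinh (l * y) := by
  rcases eq_or_ne y 0 with h | h
  · simp [shc, h]
  · rw [shc, if_neg h, div_mul_cancel₀ _ h]

lemma diff_shc : Differentiable ℝ (shc l) := (contDiff_shc l).differentiable (by norm_num)

lemma contDiff_dshc : ContDiff ℝ ∞ (deriv (shc l)) :=
  (contDiff_infty_iff_deriv.mp (contDiff_shc l)).2

lemma diff_dshc : Differentiable ℝ (deriv (shc l)) := (contDiff_dshc l).differentiable (by norm_num)

lemma diff_ddshc : Differentiable ℝ (deriv (deriv (shc l))) :=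
  ((contDiff_infty_iff_deriv.mp (contDiff_dshc l)).2).differentiable (by norm_num)

lemma shc_e1 (y : ℝ) : deriv (shc l) y * y + shc l y = cosh (l * y) * l := by
  have h1 : HasDerivAt (fun y => shc l y * y) (deriv (shc l) y * y + shc l y * 1) y :=
    ((diff_shc l y).hasDerivAt).mul (hasDerivAt_id y)
  have h2 : HasDerivAt (fun y => shc l y * y) (cosh (l * y) * (l * 1)) y := by
    have : (fun y => shc l y * y) = fun y => sinh (l * y) := funext (shc_mul_self l)
    rw [this]
    exact ((hasDerivAt_id y).const_mul l).sinh
  have := h1.unique h2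
  linarith [this]

lemma shc_e2 (y : ℝ) : deriv (deriv (shc l)) y * y + 2 * deriv (shc l) y = sinh (l * y) * l * l := by
  have h1 : HasDerivAt (fun y => deriv (shc l) y * y + shc l y)
      (deriv (deriv (shc l)) y * y + deriv (shc l) y * 1 + deriv (shc l) y) y :=
    (((diff_dshc l y).hasDerivAt).mul (hasDerivAt_id y)).add ((diff_shc l y).hasDerivAt)
  have h2 : HasDerivAt (fun y => deriv (shc l) y * y + shc l y) (sinh (l * y) * (l * 1) * l) y := by
    have : (fun y => deriv (shc l) y * y + shc l y) = fun y => cosh (l * y) * l :=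
      funext (shc_e1 l)
    rw [this]
    exact (((hasDerivAt_id y).const_mul l).cosh).mul_const l
  have := h1.unique h2
  linarith [this]

@[simp] lemma dshc_zero : deriv (shc l) 0 = 0 := by
  have := shc_e2 l 0
  simp at this
  linarith [this]

@[simp] lemma ddshc_zero : deriv (deriv (shc l)) 0 = l ^ 3 / 3 := by
  have h1 : HasDerivAt (fun y => deriv (deriv (shc l)) y * y + 2 * deriv (shc l) y)
      (deriv (deriv (deriv (shc l))) 0 * 0 + deriv (deriv (shc l)) 0 * 1
        + 2 * deriv (deriv (shc l)) 0) 0 :=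
    (((diff_ddshc l 0).hasDerivAt).mul (hasDerivAt_id 0)).add
      (((diff_dshc l 0).hasDerivAt).const_mul 2)
  have h2 : HasDerivAt (fun y => deriv (deriv (shc l)) y * y + 2 * deriv (shc l) y)
      (cosh (l * 0) * (l * 1) * l * l) 0 := by
    have : (fun y => deriv (deriv (shc l)) y * y + 2 * deriv (shc l) y)
        = fun y => sinh (l * y) * l * l := funext (shc_e2 l)
    rw [this]
    exact ((((hasDerivAt_id 0).const_mul l).sinh).mul_const l).mul_const l
  have := h1.unique h2
  simp at this
  linarith [this]

end shcfacts

section calculus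
variable {f : ℝ × ℝ × ℝ → ℝ}

lemma smooth_Dv (v : ℝ × ℝ × ℝ) (hf : ContDiff ℝ ∞ f) :
    ContDiff ℝ ∞ (fun p => fderiv ℝ f p v) :=
  (ContinuousLinearMap.apply ℝ ℝ v).contDiff.comp (hf.fderiv_right (by norm_num))

lemma smooth_Dxi (hf : ContDiff ℝ ∞ f) : ContDiff ℝ ∞ (Dxi f) := smooth_Dv _ hf
lemma smooth_Dy (hf : ContDiff ℝ ∞ f) : ContDiff ℝ ∞ (Dy f) := smooth_Dv _ hf
lemma smooth_Dz (hf : ContDiff ℝ ∞ f) : ContDiff ℝ ∞ (Dz f) := smooth_Dv _ hf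

lemma line_xi {x y z : ℝ} (hf : DifferentiableAt ℝ f (x, y, z)) :
    Dxi f (x, y, z) = deriv (fun t => f (t, y, z)) x := by
  have hγ : HasDerivAt (fun t : ℝ => ((t, y, z) : ℝ × ℝ × ℝ)) (1, 0, 0) x :=
    (hasDerivAt_id x).prodMk ((hasDerivAt_const x y).prodMk (hasDerivAt_const x z))
  exact (hf.hasFDerivAt.comp_hasDerivAt x hγ).deriv.symm

lemma line_y {x y z : ℝ} (hf : DifferentiableAt ℝ f (x, y, z)) :
    Dy f (x, y, z) = deriv (fun t => f (x, t, z)) y := by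
  have hγ : HasDerivAt (fun t : ℝ => ((x, t, z) : ℝ × ℝ × ℝ)) (0, 1, 0) y :=
    (hasDerivAt_const y x).prodMk ((hasDerivAt_id y).prodMk (hasDerivAt_const y z))
  exact (hf.hasFDerivAt.comp_hasDerivAt y hγ).deriv.symm

lemma line_z {x y z : ℝ} (hf : DifferentiableAt ℝ f (x, y, z)) :
    Dz f (x, y, z) = deriv (fun t => f (x, y, t)) z := by
  have hγ : HasDerivAt (fun t : ℝ => ((x, y, t) : ℝ × ℝ × ℝ)) (0, 0, 1) z :=
    (hasDerivAt_const z x).prodMk ((hasDerivAt_const z y).prodMk (hasDerivAt_id z))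
  exact (hf.hasFDerivAt.comp_hasDerivAt z hγ).deriv.symm

lemma iter_xi (hf : ContDiff ℝ ∞ f) (n : ℕ) :
    ∀ x y z : ℝ, Dxi^[n] f (x, y, z) = iteratedDeriv n (fun t => f (t, y, z)) x := by
  induction n with
  | zero => intro x y z; simp [iteratedDeriv_zero]
  | succ n ih =>
      intro x y z
      have hs : ContDiff ℝ ∞ (Dxi^[n] f) := by
        clear ih; induction n with
        | zero => simpa using hf
        | succ n ih2 => rw [Function.iterate_succ_apply']; exact smooth_Dxi ih2
      rw [Function.iterate_succ_apply', line_xi ((hs.differentiable (by norm_num)) _),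
        iteratedDeriv_succ]
      congr 1
      funext t
      exact ih t y z

lemma iter_y (hf : ContDiff ℝ ∞ f) (n : ℕ) :
    ∀ x y z : ℝ, Dy^[n] f (x, y, z) = iteratedDeriv n (fun t => f (x, t, z)) y := by
  induction n with
  | zero => intro x y z; simp [iteratedDeriv_zero]
  | succ n ih =>
      intro x y z
      have hs : ContDiff ℝ ∞ (Dy^[n] f) := by
        clear ih; induction n with
        | zero => simpa using hf
        | succ n ih2 => rw [Function.iterate_succ_apply']; exact smooth_Dy ih2
      rw [Function.iterate_succ_apply', line_y ((hs.differentiable (by norm_num)) _),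
        iteratedDeriv_succ]
      congr 1
      funext t
      exact ih x t z

lemma iter_z (hf : ContDiff ℝ ∞ f) (n : ℕ) :
    ∀ x y z : ℝ, Dz^[n] f (x, y, z) = iteratedDeriv n (fun t => f (x, y, t)) z := by
  induction n with
  | zero => intro x y z; simp [iteratedDeriv_zero]
  | succ n ih =>
      intro x y z
      have hs : ContDiff ℝ ∞ (Dz^[n] f) := by
        clear ih; induction n with
        | zero => simpa using hf
        | succ n ih2 => rw [Function.iterate_succ_apply']; exact smooth_Dz ih2
      rw [Function.iterate_succ_apply', line_z ((hs.differentiable (by norm_num)) _),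
        iteratedDeriv_succ]
      congr 1
      funext t
      exact ih x y t

end calculus

attribute [fun_prop] Real.contDiff_cosh Real.contDiff_sinh Real.contDiff_sin Real.contDiff_cos

lemma smooth_Gfun (l : ℝ) (hl : l ≠ 0) : ContDiff ℝ ∞ (Gfun l) := by
  unfold Gfun
  have h1 : ContDiff ℝ ∞ (fun p : ℝ × ℝ × ℝ => shc l p.2.1) :=
    (contDiff_shc l).comp (contDiff_snd.fst)
  fun_prop (disch := intros; exact pow_ne_zero _ hl)

/- ## One-dimensional derivative chains -/
section onedim
variable (l : ℝ)

noncomputable def g0 (t : ℝ) : ℝ := (1 - cos (l*t))^2 + (sin (l*t) - l*t)^2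
noncomputable def g1 (t : ℝ) : ℝ := 2*l*((l*t)*(1 - cos (l*t)))
noncomputable def g2 (t : ℝ) : ℝ := 2*l^2*((1 - cos (l*t)) + (l*t)*sin (l*t))
noncomputable def g3 (t : ℝ) : ℝ := 2*l^3*(2*sin (l*t) + (l*t)*cos (l*t))

lemma hlt (t : ℝ) : HasDerivAt (fun t : ℝ => l * t) l t := by
  simpa using (hasDerivAt_id t).const_mul l

lemma h2lt (t : ℝ) : HasDerivAt (fun t : ℝ => 2 * l * t) (2 * l) t := by
  simpa using (hasDerivAt_id t).const_mul (2 * l)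

lemma hg0 (t : ℝ) : HasDerivAt (g0 l) (g1 l t) t := by
  have h1 := hlt l t
  refine ((((h1.cos).const_sub 1).fun_pow 2).fun_add ((h1.sin.fun_sub h1).fun_pow 2)).adj
    (fun y => by unfold g0; ring) ?_
  unfold g1; push_cast; ring

lemma hg1 (t : ℝ) : HasDerivAt (g1 l) (g2 l t) t := by
  have h1 := hlt l t
  refine ((h1.fun_mul ((h1.cos).const_sub 1)).const_mul (2*l)).adj
    (fun y => by unfold g1; ring) ?_
  unfold g2; ring

lemma hg2 (t : ℝ) : HasDerivAt (g2 l) (g3 l t) t := by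
  have h1 := hlt l t
  refine ((((h1.cos).const_sub 1).fun_add (h1.fun_mul h1.sin)).const_mul (2*l^2)).adj
    (fun y => by unfold g2; ring) ?_
  unfold g3; ring

lemma hg3 : HasDerivAt (g3 l) (6*l^4) 0 := by
  have h1 := hlt l 0
  refine (((h1.sin.const_mul 2).fun_add (h1.fun_mul h1.cos)).const_mul (2*l^3)).adj
    (fun y => by unfold g3; ring) ?_
  simp only [mul_zero, Real.cos_zero, Real.sin_zero]; ring

@[simp] lemma g0_zero : g0 l 0 = 0 := by simp [g0]
@[simp] lemma g1_zero : g1 l 0 = 0 := by simp [g1]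
@[simp] lemma g2_zero : g2 l 0 = 0 := by simp [g2]
@[simp] lemma g3_zero : g3 l 0 = 0 := by simp [g3]

lemma dg0 (k : ℝ) : deriv (fun t => k * g0 l t) = fun t => k * g1 l t :=
  funext fun t => ((hg0 l t).const_mul k).deriv
lemma dg1 (k : ℝ) : deriv (fun t => k * g1 l t) = fun t => k * g2 l t :=
  funext fun t => ((hg1 l t).const_mul k).deriv
lemma dg2 (k : ℝ) : deriv (fun t => k * g2 l t) = fun t => k * g3 l t :=
  funext fun t => ((hg2 l t).const_mul k).deriv
lemma dg3 (k : ℝ) : deriv (fun t => k * g3 l t) 0 = k * (6*l^4) :=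
  ((hg3 l).const_mul k).deriv

noncomputable def w0 (y : ℝ) : ℝ := (exp (l*y) - 1)^4 / 4
noncomputable def w1 (y : ℝ) : ℝ := (exp (l*y) - 1)^3 * (exp (l*y) * l)
noncomputable def w2 (y : ℝ) : ℝ :=
  3*(exp (l*y) - 1)^2*(exp (l*y) * l)^2 + (exp (l*y) - 1)^3*(exp (l*y)*l^2)
noncomputable def w3 (y : ℝ) : ℝ :=
  6*(exp (l*y) - 1)*(exp (l*y) * l)^3 + 9*(exp (l*y) - 1)^2*(exp (l*y))^2*l^3
    + (exp (l*y) - 1)^3*(exp (l*y)*l^3)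

lemma hexp' (y : ℝ) : HasDerivAt (fun y : ℝ => exp (l*y)) (exp (l*y) * l) y := by
  simpa using (hlt l y).exp

lemma hw0 (y : ℝ) : HasDerivAt (w0 l) (w1 l y) y := by
  refine ((((hexp' l y).sub_const 1).fun_pow 4).div_const 4).adj
    (fun y => by unfold w0; ring) ?_
  unfold w1; push_cast; ring

lemma hw1 (y : ℝ) : HasDerivAt (w1 l) (w2 l y) y := by
  have h := hexp' l y
  refine (((h.sub_const 1).fun_pow 3).fun_mul (h.mul_const l)).adj
    (fun y => by unfold w1; ring) ?_
  unfold w2; push_cast; ring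

lemma hw2 (y : ℝ) : HasDerivAt (w2 l) (w3 l y) y := by
  have h := hexp' l y
  refine (((((h.sub_const 1).fun_pow 2).fun_mul ((h.mul_const l).fun_pow 2)).const_mul 3).fun_add
    (((h.sub_const 1).fun_pow 3).fun_mul (h.mul_const (l^2)))).adj
    (fun y => by unfold w2; ring) ?_
  unfold w3; push_cast; ring

lemma hw3 : HasDerivAt (w3 l) (6*l^4) 0 := by
  have h := hexp' l 0
  refine (((((h.sub_const 1).fun_mul ((h.mul_const l).fun_pow 3)).const_mul 6).fun_add
    ((((h.sub_const 1).fun_pow 2).fun_mul (h.fun_pow 2)).const_mul (9*l^3))).fun_add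
    (((h.sub_const 1).fun_pow 3).fun_mul (h.mul_const (l^3)))).adj
    (fun y => by unfold w3; ring) ?_
  simp only [mul_zero, Real.exp_zero]; push_cast; ring

@[simp] lemma w0_zero : w0 l 0 = 0 := by simp [w0]
@[simp] lemma w1_zero : w1 l 0 = 0 := by simp [w1]
@[simp] lemma w2_zero : w2 l 0 = 0 := by simp [w2]
@[simp] lemma w3_zero : w3 l 0 = 0 := by simp [w3]

lemma dw0 (k : ℝ) : deriv (fun t => k * w0 l t) = fun t => k * w1 l t :=
  funext fun t => ((hw0 l t).const_mul k).deriv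
lemma dw1 (k : ℝ) : deriv (fun t => k * w1 l t) = fun t => k * w2 l t :=
  funext fun t => ((hw1 l t).const_mul k).deriv
lemma dw2 (k : ℝ) : deriv (fun t => k * w2 l t) = fun t => k * w3 l t :=
  funext fun t => ((hw2 l t).const_mul k).deriv
lemma dw3 (k : ℝ) : deriv (fun t => k * w3 l t) 0 = k * (6*l^4) :=
  ((hw3 l).const_mul k).deriv

noncomputable def r0 (t : ℝ) : ℝ :=
  16*l^2/l^4 * g0 l t + 8/l^4*(l^2*(1 - cos (l*t)) - l^3/3*(t*(sin (l*t) - l*t)))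
noncomputable def r1 (t : ℝ) : ℝ :=
  16*l^2/l^4 * g1 l t + 8/l^4*(l^2*(sin (l*t)*l)
    - l^3/3*((sin (l*t) - l*t) + t*(cos (l*t)*l - l)))

lemma hr0 (t : ℝ) : HasDerivAt (r0 l) (r1 l t) t := by
  have h1 := hlt l t
  refine ((((hg0 l t).const_mul (16*l^2/l^4)).fun_add
    (((((h1.cos).const_sub 1).const_mul (l^2)).fun_sub
      (((hasDerivAt_id' t).fun_mul (h1.sin.fun_sub h1)).const_mul (l^3/3))).const_mul (8/l^4))).adj
    (fun y => by unfold r0; ring) ?_)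
  unfold r1; ring

lemma dr0 : deriv (r0 l) = r1 l := funext fun t => (hr0 l t).deriv

@[simp] lemma r0_zero : r0 l 0 = 0 := by simp [r0]
@[simp] lemma r1_zero : r1 l 0 = 0 := by simp [r1]

lemma dr1 (hl : l ≠ 0) : deriv (r1 l) 0 = 8 := by
  have h1 := hlt l 0
  have hcos : HasDerivAt (fun t : ℝ => cos (l*t)*l - l) (-sin (l*0)*l*l) 0 := by
    refine ((h1.cos.mul_const l).sub_const l).adj (fun y => rfl) (by ring)
  have h : HasDerivAt (r1 l)
      (16*l^2/l^4 * g2 l 0 + 8/l^4*(l^2*(cos (l*0)*l*l)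
        - l^3/3*((cos (l*0)*l - l) + (1*(cos (l*0)*l - l) + 0*(-sin (l*0)*l*l))))) 0 := by
    refine (((hg1 l 0).const_mul (16*l^2/l^4)).fun_add
      ((((h1.sin.mul_const l).const_mul (l^2)).fun_sub
        (((h1.sin.fun_sub h1).fun_add ((hasDerivAt_id' 0).fun_mul hcos)).const_mul (l^3/3))).const_mul
          (8/l^4))).adj (fun y => by unfold r1; ring) ?_
    ring
  rw [h.deriv]
  simp only [mul_zero, Real.cos_zero, Real.sin_zero, g2_zero]
  field_simp
  ring

noncomputable def b0 (t : ℝ) : ℝ := 8*l^2/l^4*(sin (l*t) - l*t)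

lemma db0 : deriv (b0 l) 0 = 0 := by
  have h : HasDerivAt (b0 l) (8*l^2/l^4*(cos (l*0)*l - l)) 0 := by
    refine (((hlt l 0).sin.fun_sub (hlt l 0)).const_mul (8*l^2/l^4)).adj
      (fun y => by unfold b0; ring) (by ring)
  rw [h.deriv]
  simp

@[simp] lemma b0_zero : b0 l 0 = 0 := by simp [b0]

end onedim

noncomputable def u0 (z : ℝ) : ℝ := 4*z^2
noncomputable def u1 (z : ℝ) : ℝ := 8*z

lemma hu0 (z : ℝ) : HasDerivAt u0 (u1 z) z := by
  refine ((hasDerivAt_pow 2 z).const_mul 4).adj (fun y => by unfold u0; ring) ?_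
  unfold u1; push_cast; ring

lemma du0 : deriv u0 = u1 := funext fun z => (hu0 z).deriv

lemma du1 : deriv u1 0 = 8 := by
  have h : HasDerivAt u1 8 0 :=
    ((hasDerivAt_id' 0).const_mul 8).adj (fun y => rfl) (by norm_num)
  exact h.deriv

@[simp] lemma u0_zero : u0 0 = 0 := by simp [u0]
@[simp] lemma u1_zero : u1 0 = 0 := by simp [u1]

/- ## Closed forms for the first and second partial derivatives -/

noncomputable def P3f (l : ℝ) (p : ℝ × ℝ × ℝ) : ℝ :=
  4 * exp (2*l*p.2.1) / l^4 *
    (2 * (shc l p.2.1 * (-p.1 + l*p.2.2) + sin (l*p.1)) * (shc l p.2.1 * l))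

noncomputable def P2f (l : ℝ) (p : ℝ × ℝ × ℝ) : ℝ :=
  8*l*exp (2*l*p.2.1)/l^4 *
      ((cosh (l*p.2.1) - cos (l*p.1))^2 + (shc l p.2.1 * (-p.1 + l*p.2.2) + sin (l*p.1))^2)
    + 4*exp (2*l*p.2.1)/l^4 *
      (2*(cosh (l*p.2.1) - cos (l*p.1))*(sinh (l*p.2.1)*l)
        + 2*(shc l p.2.1 * (-p.1 + l*p.2.2) + sin (l*p.1))
            *(deriv (shc l) p.2.1 * (-p.1 + l*p.2.2)))

noncomputable def P22f (l : ℝ) (p : ℝ × ℝ × ℝ) : ℝ :=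
  16*l^2*exp (2*l*p.2.1)/l^4 *
      ((cosh (l*p.2.1) - cos (l*p.1))^2 + (shc l p.2.1 * (-p.1 + l*p.2.2) + sin (l*p.1))^2)
    + 16*l*exp (2*l*p.2.1)/l^4 *
      (2*(cosh (l*p.2.1) - cos (l*p.1))*(sinh (l*p.2.1)*l)
        + 2*(shc l p.2.1 * (-p.1 + l*p.2.2) + sin (l*p.1))
            *(deriv (shc l) p.2.1 * (-p.1 + l*p.2.2)))
    + 4*exp (2*l*p.2.1)/l^4 *
      (2*(sinh (l*p.2.1)*l)^2 + 2*(cosh (l*p.2.1) - cos (l*p.1))*(cosh (l*p.2.1)*l^2)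
        + 2*(deriv (shc l) p.2.1 * (-p.1 + l*p.2.2))^2
        + 2*(shc l p.2.1 * (-p.1 + l*p.2.2) + sin (l*p.1))
            *(deriv (deriv (shc l)) p.2.1 * (-p.1 + l*p.2.2)))

lemma DzG_eq (l : ℝ) (hl : l ≠ 0) : Dz (Gfun l) = P3f l := by
  funext p
  obtain ⟨x, y, z⟩ := p
  rw [line_z (((smooth_Gfun l hl).differentiable (by norm_num)) _)]
  have hB := (((hlt l z).const_add (-x)).const_mul (shc l y)).add_const (sin (l*x))
  have h : HasDerivAt (fun t => Gfun l (x, y, t)) (P3f l (x, y, z)) z := by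
    refine (((hB.pow 2).const_add ((cosh (l*y) - cos (l*x))^2)).const_mul
      (4 * exp (2*l*y) / l^4)).adj (fun _ => rfl) ?_
    simp only [P3f]
    push_cast
    ring
  exact h.deriv

lemma DyG_eq (l : ℝ) (hl : l ≠ 0) : Dy (Gfun l) = P2f l := by
  funext p
  obtain ⟨x, y, z⟩ := p
  rw [line_y (((smooth_Gfun l hl).differentiable (by norm_num)) _)]
  have hE := (((h2lt l y).exp).const_mul 4).div_const (l^4)
  have hA := ((hlt l y).cosh.sub_const (cos (l*x))).fun_pow 2
  have hB2 := (((diff_shc l y).hasDerivAt.mul_const (-x + l*z)).add_const (sin (l*x))).fun_pow 2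
  have h : HasDerivAt (fun t => Gfun l (x, t, z)) (P2f l (x, y, z)) y := by
    refine (hE.fun_mul (hA.fun_add hB2)).adj (fun _ => rfl) ?_
    simp only [P2f]
    push_cast
    ring
  exact h.deriv

lemma DyP2_eq (l : ℝ) (hl : l ≠ 0) : Dy (P2f l) = P22f l := by
  have hP2s : ContDiff ℝ ∞ (P2f l) := by
    rw [← DyG_eq l hl]; exact smooth_Dy (smooth_Gfun l hl)
  funext p
  obtain ⟨x, y, z⟩ := p
  rw [line_y ((hP2s.differentiable (by norm_num)) _)]
  have hE8 := (((h2lt l y).exp).const_mul (8*l)).div_const (l^4)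
  have hE4 := (((h2lt l y).exp).const_mul 4).div_const (l^4)
  have hA1 := (hlt l y).cosh.sub_const (cos (l*x))
  have hB1 := ((diff_shc l y).hasDerivAt.mul_const (-x + l*z)).add_const (sin (l*x))
  have hS := (hA1.fun_pow 2).fun_add (hB1.fun_pow 2)
  have hsinhl := ((hlt l y).sinh).mul_const l
  have hds := (diff_dshc l y).hasDerivAt.mul_const (-x + l*z)
  have hW := ((hA1.const_mul 2).fun_mul hsinhl).fun_add ((hB1.const_mul 2).fun_mul hds)
  have h : HasDerivAt (fun t => P2f l (x, t, z)) (P22f l (x, y, z)) y := by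
    refine ((hE8.fun_mul hS).fun_add (hE4.fun_mul hW)).adj (fun _ => rfl) ?_
    simp only [P22f]
    push_cast
    ring
  exact h.deriv

/- ## Restrictions to the coordinate axes -/

lemma restrGxi (l : ℝ) : (fun t => Gfun l (t, 0, 0)) = fun t => 4/l^4 * g0 l t := by
  funext t
  simp only [Gfun, g0, shc_zero, mul_zero, Real.exp_zero, Real.cosh_zero, add_zero, neg_zero]
  ring

lemma restrGy (l : ℝ) (hl : l ≠ 0) : (fun y => Gfun l (0, y, 0)) = fun y => 4/l^4 * w0 l y := by
  funext y
  simp only [Gfun, w0, mul_zero, neg_zero, zero_add, add_zero, Real.cos_zero, Real.sin_zero]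
  rw [Real.cosh_eq, show 2*l*y = l*y + l*y by ring, Real.exp_add, Real.exp_neg]
  have h := Real.exp_ne_zero (l*y)
  field_simp
  ring

lemma restrGz (l : ℝ) (hl : l ≠ 0) : (fun z => Gfun l (0, 0, z)) = u0 := by
  funext z
  simp only [Gfun, u0, shc_zero, mul_zero, neg_zero, zero_add, Real.exp_zero,
    Real.cosh_zero, Real.cos_zero, Real.sin_zero, sub_self, add_zero]
  field_simp
  ring

lemma restr2 (l : ℝ) : (fun t => P2f l (t, 0, 0)) = fun t => 8*l/l^4 * g0 l t := by
  funext t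
  simp only [P2f, g0, shc_zero, dshc_zero, mul_zero, zero_mul, Real.exp_zero,
    Real.sinh_zero, Real.cosh_zero, add_zero, neg_zero]
  ring

lemma restr22 (l : ℝ) : (fun t => P22f l (t, 0, 0)) = r0 l := by
  funext t
  simp only [P22f, r0, g0, shc_zero, dshc_zero, ddshc_zero, mul_zero, zero_mul,
    Real.exp_zero, Real.sinh_zero, Real.cosh_zero, add_zero, zero_add, neg_zero]
  ring

lemma restr3 (l : ℝ) : (fun t => P3f l (t, 0, 0)) = b0 l := by
  funext t
  simp only [P3f, b0, shc_zero, mul_zero, Real.exp_zero, add_zero, neg_zero]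
  ring

lemma restr3y (l : ℝ) : (fun y => P3f l (0, y, 0)) = fun _ => (0:ℝ) := by
  funext y
  simp [P3f]

/-- All partial derivatives `∂^{α₁}_ξ ∂^{α₂}_y ∂^{α₃}_z G(0,0,0)` with
`α₁ + α₂ + 2α₃ ≤ 3` vanish, and `∂⁴_ξ G(0,0,0) = ∂⁴_y G(0,0,0) = 24`,
`∂²_ξ ∂²_y G(0,0,0) = 8`, `∂²_z G(0,0,0) = 8`. -/
theorem Gfun_derivatives_at_zero (lam : ℝ) (hlam : lam ≠ 0) :
    (∀ a1 a2 a3 : ℕ, a1 + a2 + 2 * a3 ≤ 3 →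
        Dxi^[a1] (Dy^[a2] (Dz^[a3] (Gfun lam))) ((0, 0, 0) : ℝ × ℝ × ℝ) = 0) ∧
    Dxi^[4] (Gfun lam) ((0, 0, 0) : ℝ × ℝ × ℝ) = 24 ∧
    Dy^[4] (Gfun lam) ((0, 0, 0) : ℝ × ℝ × ℝ) = 24 ∧
    Dxi^[2] (Dy^[2] (Gfun lam)) ((0, 0, 0) : ℝ × ℝ × ℝ) = 8 ∧
    Dz^[2] (Gfun lam) ((0, 0, 0) : ℝ × ℝ × ℝ) = 8 := by
  have hG : ContDiff ℝ ∞ (Gfun lam) := smooth_Gfun lam hlam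
  have hP2s : ContDiff ℝ ∞ (P2f lam) := by
    rw [← DyG_eq lam hlam]; exact smooth_Dy hG
  have hP22s : ContDiff ℝ ∞ (P22f lam) := by
    rw [← DyP2_eq lam hlam]; exact smooth_Dy hP2s
  have hP3s : ContDiff ℝ ∞ (P3f lam) := by
    rw [← DzG_eq lam hlam]; exact smooth_Dz hG
  have hGd : Differentiable ℝ (Gfun lam) := hG.differentiable (by norm_num)
  have hP2d : Differentiable ℝ (P2f lam) := hP2s.differentiable (by norm_num)
  have hP22d : Differentiable ℝ (P22f lam) := hP22s.differentiable (by norm_num)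
  have hP3d : Differentiable ℝ (P3f lam) := hP3s.differentiable (by norm_num)
  have hDy2 : Dy^[2] (Gfun lam) = P22f lam := by
    rw [Function.iterate_succ_apply (f := Dy) (n := 1), Function.iterate_one,
      DyG_eq lam hlam, DyP2_eq lam hlam]
  have hl4 : lam^4 ≠ 0 := pow_ne_zero _ hlam
  refine ⟨?_, ?_, ?_, ?_, ?_⟩
  · intro a1 a2 a3 h
    have hb3 : a3 ≤ 1 := by omega
    have hb2 : a2 ≤ 3 := by omega
    have hb1 : a1 ≤ 3 := by omega
    interval_cases a3 <;> interval_cases a2 <;> interval_cases a1 <;>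
      try (exfalso; omega)
    -- (0,0,0)
    · simp only [Function.iterate_zero, id_eq]
      simp [Gfun, shc_zero]
    -- (1,0,0)
    · simp only [Function.iterate_zero, id_eq]
      rw [iter_xi hG 1 0 0 0, restrGxi lam, iteratedDeriv_one, dg0]
      simp
    -- (2,0,0)
    · simp only [Function.iterate_zero, id_eq]
      rw [iter_xi hG 2 0 0 0, restrGxi lam, iteratedDeriv_succ' (n := 1), dg0, iteratedDeriv_one, dg1]
      simp
    -- (3,0,0)
    · simp only [Function.iterate_zero, id_eq]
      rw [iter_xi hG 3 0 0 0, restrGxi lam, iteratedDeriv_succ' (n := 2), dg0, iteratedDeriv_succ' (n := 1), dg1, iteratedDeriv_one, dg2]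
      simp
    -- (0,1,0)
    · simp only [Function.iterate_zero, id_eq]
      rw [iter_y hG 1 0 0 0, restrGy lam hlam, iteratedDeriv_one, dw0]
      simp
    -- (1,1,0)
    · simp only [Function.iterate_zero, id_eq, Function.iterate_one]
      rw [DyG_eq lam hlam, line_xi (hP2d _), restr2 lam, dg0]
      simp
    -- (2,1,0)
    · simp only [Function.iterate_zero, id_eq, Function.iterate_one]
      rw [DyG_eq lam hlam, iter_xi hP2s 2 0 0 0, restr2 lam, iteratedDeriv_succ' (n := 1), dg0, iteratedDeriv_one, dg1]
      simp
    -- (0,2,0)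
    · simp only [Function.iterate_zero, id_eq]
      rw [iter_y hG 2 0 0 0, restrGy lam hlam, iteratedDeriv_succ' (n := 1), dw0, iteratedDeriv_one, dw1]
      simp
    -- (1,2,0)
    · simp only [Function.iterate_zero, id_eq, Function.iterate_one]
      rw [hDy2, line_xi (hP22d _), restr22 lam, dr0]
      simp
    -- (0,3,0)
    · simp only [Function.iterate_zero, id_eq]
      rw [iter_y hG 3 0 0 0, restrGy lam hlam, iteratedDeriv_succ' (n := 2), dw0, iteratedDeriv_succ' (n := 1), dw1, iteratedDeriv_one, dw2]
      simp
    -- (0,0,1)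
    · simp only [Function.iterate_zero, id_eq, Function.iterate_one]
      rw [line_z (hGd _), restrGz lam hlam, du0]
      simp
    -- (1,0,1)
    · simp only [Function.iterate_zero, id_eq, Function.iterate_one]
      rw [DzG_eq lam hlam, line_xi (hP3d _), restr3 lam, db0]
    -- (0,1,1)
    · simp only [Function.iterate_zero, id_eq, Function.iterate_one]
      rw [DzG_eq lam hlam, line_y (hP3d _), restr3y lam]
      simp
  -- Dxi^4 = 24
  · rw [iter_xi hG 4 0 0 0, restrGxi lam, iteratedDeriv_succ' (n := 3), dg0, iteratedDeriv_succ' (n := 2), dg1, iteratedDeriv_succ' (n := 1), dg2, iteratedDeriv_one, dg3]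
    field_simp
    ring
  -- Dy^4 = 24
  · rw [iter_y hG 4 0 0 0, restrGy lam hlam, iteratedDeriv_succ' (n := 3), dw0, iteratedDeriv_succ' (n := 2), dw1, iteratedDeriv_succ' (n := 1), dw2, iteratedDeriv_one, dw3]
    field_simp
    ring
  -- Dxi^2 Dy^2 = 8
  · rw [hDy2, iter_xi hP22s 2 0 0 0, restr22 lam, iteratedDeriv_succ' (n := 1), dr0, iteratedDeriv_one, dr1 lam hlam]
  -- Dz^2 = 8
  · rw [iter_z hG 2 0 0 0, restrGz lam hlam, iteratedDeriv_succ' (n := 1), du0, iteratedDeriv_one, du1]
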